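/- Full support of eigenmeasures and comparison of eigenvalue with the growth rate: Assume hypothesis (I), let V : X → ℝ be continuous, and suppose λ₂ > 0 and μ is a Borel probability measure on X with Q^{V*} μ = λ₂·μ. Then the support of μ is all of X (i.e., μ(U) > 0 for every nonempty open U ⊆ X), and λ₂^n ≤ ‖Q_n^V 1‖_∞ for every n ∈ ℕ; in particular λ₂ ≤ λ₁, where λ₁ := inf_{n≥1} ‖Q_n^V 1‖_∞^{1/n}. -/

import Mathlib

open MeasureTheory Filter Topology
open scoped ENNReal NNReal

noncomputable def kIter {X : Type*} [MeasurableSpace X] (κ : X → Measure X) : ℕ → X → Measure X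
  | 0 => fun x => Measure.dirac x
  | n + 1 => fun x => (kIter κ n x).bind κ

noncomputable def FK {X : Type*} [MeasurableSpace X] (κ : X → Measure X) (V f : X → ℝ) (x : X) : ℝ :=
  ∫ y, Real.exp (V y) * f y ∂(κ x)

noncomputable def FKiter {X : Type*} [MeasurableSpace X] (κ : X → Measure X) (V : X → ℝ) :
    ℕ → (X → ℝ) → X → ℝ
  | 0 => fun f => f
  | n + 1 => fun f => FK κ V (FKiter κ V n f)

noncomputable def supNorm {X : Type*} (f : X → ℝ) : ℝ := ⨆ x, |f x|

noncomputable def lipConst {X : Type*} [MetricSpace X] (f : X → ℝ) : ℝ :=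
  sSup {c | ∃ x y, x ≠ y ∧ c = |f x - f y| / dist x y}

noncomputable def lipNorm {X : Type*} [MetricSpace X] (f : X → ℝ) : ℝ := supNorm f + lipConst f

noncomputable def FKdual {X : Type*} [MeasurableSpace X] (κ : X → Measure X) (V : X → ℝ)
    (σ : Measure X) : Measure X :=
  σ.bind fun x => (κ x).withDensity fun y => ENNReal.ofReal (Real.exp (V y))

/-- Full support of eigenmeasures and comparison of the eigenvalue with
the growth rate: if `Q^{V*} μ = λ₂·μ` with `λ₂ > 0`, then `μ` has full support,
`λ₂ⁿ ≤ ‖Q_n^V 1‖_∞` for all `n`, and `λ₂ ≤ λ₁ = inf_{n≥1} ‖Q_n^V 1‖_∞^{1/n}`. -/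
theorem FKdual_eigenmeasure_full_support
    {X : Type*} [MetricSpace X] [CompactSpace X] [MeasurableSpace X] [BorelSpace X]
    (κ : X → Measure X) (hκmeas : Measurable κ)
    (hκprob : ∀ x, IsProbabilityMeasure (κ x))
    (hFeller : ∀ f : X → ℝ, Continuous f → Continuous fun x => ∫ y, f y ∂(κ x))
    -- hypothesis (I): uniform irreducibility
    (hI : ∀ ε : ℝ, 0 < ε → ∃ (N : ℕ) (p : ℝ≥0∞), 0 < p ∧
      ∀ x y : X, p < kIter κ N x (Metric.ball y ε))
    (V : X → ℝ) (hV : Continuous V)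
    (lam2 : ℝ) (hlam2 : 0 < lam2)
    (μ : Measure X) (hμ : IsProbabilityMeasure μ)
    (heig : FKdual κ V μ = ENNReal.ofReal lam2 • μ) :
    (∀ U : Set X, IsOpen U → U.Nonempty → 0 < μ U) ∧
    (∀ n : ℕ, lam2 ^ n ≤ supNorm (FKiter κ V n 1)) ∧
    lam2 ≤ ⨅ n : {n : ℕ // 1 ≤ n}, supNorm (FKiter κ V (n : ℕ) 1) ^ (((n : ℕ) : ℝ)⁻¹) := by
  -- X is nonempty since μ is a probability measure
  have hXne : Nonempty X := by
    by_contra h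
    rw [not_nonempty_iff] at h
    have h1 := hμ.measure_univ
    rw [Set.univ_eq_empty_iff.mpr h, measure_empty] at h1
    exact zero_ne_one h1
  -- the density
  set ρ : X → ℝ≥0∞ := fun y => ENNReal.ofReal (Real.exp (V y)) with hρdef
  have hρ : Measurable ρ :=
    ENNReal.measurable_ofReal.comp (Real.continuous_exp.comp hV).measurable
  -- measurability of the iterated kernels
  have hkIter : ∀ n, Measurable (kIter κ n) := by
    intro n
    induction n with
    | zero => exact Measure.measurable_dirac
    | succ n ih => exact (Measure.measurable_bind' hκmeas).comp ih
  -- measurability of the tilted kernel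
  have hwdmeas : Measurable fun x => (κ x).withDensity ρ := by
    apply Measure.measurable_of_measurable_coe
    intro s hs
    simp only [withDensity_apply _ hs]
    simp_rw [← lintegral_indicator hs]
    exact (Measure.measurable_lintegral (hρ.indicator hs)).comp hκmeas
  -- continuity of the iterates
  have hcont : ∀ n, Continuous (FKiter κ V n 1) := by
    intro n
    induction n with
    | zero => exact continuous_const
    | succ n ih =>
        exact hFeller (fun y => Real.exp (V y) * FKiter κ V n 1 y)
          (((Real.continuous_exp.comp hV)).mul ih)
  -- nonnegativity of the iterates
  have hnonneg : ∀ n x, 0 ≤ FKiter κ V n 1 x := by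
    intro n
    induction n with
    | zero => intro x; norm_num [FKiter]
    | succ n ih =>
        intro x
        exact integral_nonneg fun y => mul_nonneg (Real.exp_nonneg _) (ih y)
  -- the key duality bridge
  have hbridge : ∀ f : X → ℝ, Continuous f → (∀ x, 0 ≤ f x) →
      ∫⁻ x, ENNReal.ofReal (FK κ V f x) ∂μ
        = ENNReal.ofReal lam2 * ∫⁻ x, ENNReal.ofReal (f x) ∂μ := by
    intro f hf hf0
    have hmf : Measurable fun y => ENNReal.ofReal (f y) :=
      ENNReal.measurable_ofReal.comp hf.measurable
    have step1 : ∀ x, ENNReal.ofReal (FK κ V f x)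
        = ∫⁻ y, ENNReal.ofReal (f y) ∂((κ x).withDensity ρ) := by
      intro x
      haveI := hκprob x
      have hint : Integrable (fun y => Real.exp (V y) * f y) (κ x) :=
        ((Real.continuous_exp.comp hV).mul hf).integrable_of_hasCompactSupport
          (HasCompactSupport.of_compactSpace _)
      have h0 : 0 ≤ᵐ[κ x] fun y => Real.exp (V y) * f y :=
        Filter.Eventually.of_forall fun y => mul_nonneg (Real.exp_nonneg _) (hf0 y)
      rw [lintegral_withDensity_eq_lintegral_mul _ hρ hmf, FK,
        ofReal_integral_eq_lintegral_ofReal hint h0]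
      congr 1
      funext y
      simp [hρdef, ENNReal.ofReal_mul (Real.exp_nonneg (V y))]
    calc ∫⁻ x, ENNReal.ofReal (FK κ V f x) ∂μ
        = ∫⁻ x, ∫⁻ y, ENNReal.ofReal (f y) ∂((κ x).withDensity ρ) ∂μ := by simp_rw [step1]
      _ = ∫⁻ y, ENNReal.ofReal (f y) ∂(FKdual κ V μ) :=
          (Measure.lintegral_bind hwdmeas.aemeasurable hmf.aemeasurable).symm
      _ = ENNReal.ofReal lam2 * ∫⁻ x, ENNReal.ofReal (f x) ∂μ := by
          rw [heig, lintegral_smul_measure, smul_eq_mul]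
  -- the eigenvalue identity for the iterates
  have hLn : ∀ n, ∫⁻ x, ENNReal.ofReal (FKiter κ V n 1 x) ∂μ = (ENNReal.ofReal lam2) ^ n := by
    intro n
    induction n with
    | zero => simp [FKiter, hμ.measure_univ]
    | succ n ih =>
        have : FKiter κ V (n + 1) 1 = FK κ V (FKiter κ V n 1) := rfl
        rw [this, hbridge _ (hcont n) (hnonneg n), ih, pow_succ, mul_comm]
  -- Part 2
  have part2 : ∀ n : ℕ, lam2 ^ n ≤ supNorm (FKiter κ V n 1) := by
    intro n
    set f := FKiter κ V n 1 with hfdef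
    have hb : BddAbove (Set.range fun x => |f x|) :=
      (isCompact_range (hcont n).abs).bddAbove
    have hfs : ∀ x, f x ≤ supNorm f := fun x => (le_abs_self _).trans (le_ciSup hb x)
    have hsn0 : 0 ≤ supNorm f :=
      (abs_nonneg (f hXne.some)).trans (le_ciSup hb hXne.some)
    have key : (ENNReal.ofReal lam2) ^ n ≤ ENNReal.ofReal (supNorm f) := by
      rw [← hLn n]
      calc ∫⁻ x, ENNReal.ofReal (f x) ∂μ
          ≤ ∫⁻ _, ENNReal.ofReal (supNorm f) ∂μ :=
            lintegral_mono fun x => ENNReal.ofReal_le_ofReal (hfs x)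
        _ = ENNReal.ofReal (supNorm f) := by simp [hμ.measure_univ]
    rw [← ENNReal.ofReal_pow hlam2.le] at key
    exact (ENNReal.ofReal_le_ofReal_iff hsn0).mp key
  refine ⟨?_, part2, ?_⟩
  · -- Part 1: full support
    obtain ⟨x₀, -, hx₀⟩ := isCompact_univ.exists_isMinOn Set.univ_nonempty hV.continuousOn
    set m := Real.exp (V x₀) with hmdef
    have hm0 : ENNReal.ofReal m ≠ 0 := by
      simp [hmdef, ENNReal.ofReal_eq_zero, not_le, Real.exp_pos]
    have hmt : ENNReal.ofReal m ≠ ∞ := ENNReal.ofReal_ne_top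
    set c : ℝ≥0∞ := (ENNReal.ofReal m)⁻¹ * ENNReal.ofReal lam2 with hcdef
    -- one-step comparison
    have hE : ∀ A : Set X, MeasurableSet A → (μ.bind κ) A ≤ c * μ A := by
      intro A hA
      have hcoe : Measurable fun x => κ x A := (Measure.measurable_coe hA).comp hκmeas
      have h1 : ENNReal.ofReal m * (μ.bind κ) A ≤ (FKdual κ V μ) A := by
        rw [FKdual, Measure.bind_apply hA hwdmeas.aemeasurable, Measure.bind_apply hA hκmeas.aemeasurable,
          ← lintegral_const_mul _ hcoe]
        apply lintegral_mono
        intro x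
        show ENNReal.ofReal m * κ x A ≤ ((κ x).withDensity ρ) A
        rw [withDensity_apply _ hA]
        calc ENNReal.ofReal m * κ x A = ∫⁻ _ in A, ENNReal.ofReal m ∂(κ x) :=
              (setLIntegral_const A _).symm
          _ ≤ ∫⁻ y in A, ρ y ∂(κ x) :=
              lintegral_mono fun y =>
                ENNReal.ofReal_le_ofReal (Real.exp_le_exp.mpr (hx₀ (Set.mem_univ y)))
      have h2 : (FKdual κ V μ) A = ENNReal.ofReal lam2 * μ A := by
        rw [heig]; simp [Measure.smul_apply, smul_eq_mul]
      calc (μ.bind κ) A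
          = (ENNReal.ofReal m)⁻¹ * (ENNReal.ofReal m * (μ.bind κ) A) := by
            rw [← mul_assoc, ENNReal.inv_mul_cancel hm0 hmt, one_mul]
        _ ≤ (ENNReal.ofReal m)⁻¹ * (ENNReal.ofReal lam2 * μ A) :=
            mul_le_mul_right (h1.trans h2.le) _
        _ = c * μ A := by rw [hcdef, mul_assoc]
    -- iterated comparison
    have hiter : ∀ n, μ.bind (kIter κ n) ≤ (c ^ n) • μ := by
      intro n
      induction n with
      | zero =>
          have : μ.bind (kIter κ 0) = μ := Measure.bind_dirac
          rw [this, pow_zero, one_smul]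
      | succ n ih =>
          have hrw : μ.bind (kIter κ (n + 1)) = (μ.bind (kIter κ n)).bind κ :=
            (Measure.bind_bind (hkIter n).aemeasurable hκmeas.aemeasurable).symm
          rw [hrw, Measure.le_iff]
          intro A hA
          rw [Measure.bind_apply hA hκmeas.aemeasurable]
          calc ∫⁻ z, κ z A ∂(μ.bind (kIter κ n))
              ≤ ∫⁻ z, κ z A ∂((c ^ n) • μ) := lintegral_mono' ih le_rfl
            _ = c ^ n * (μ.bind κ) A := by
                rw [lintegral_smul_measure, Measure.bind_apply hA hκmeas.aemeasurable, smul_eq_mul]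
            _ ≤ c ^ n * (c * μ A) := mul_le_mul_right (hE A hA) _
            _ = (c ^ (n + 1) • μ) A := by
                rw [Measure.smul_apply, smul_eq_mul, pow_succ, hcdef]; ring
    intro U hU hUne
    obtain ⟨y, hy⟩ := hUne
    obtain ⟨ε, hε, hball⟩ := Metric.isOpen_iff.mp hU y hy
    obtain ⟨N, p, hp, hpball⟩ := hI ε hε
    by_contra h
    have hμU : μ U = 0 := by
      rcases (zero_le : 0 ≤ μ U).lt_or_eq with h' | h'
      · exact absurd h' h
      · exact h'.symm
    have h1 : p ≤ (μ.bind (kIter κ N)) U := by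
      rw [Measure.bind_apply hU.measurableSet (hkIter N).aemeasurable]
      calc p = ∫⁻ _, p ∂μ := by simp [hμ.measure_univ]
        _ ≤ ∫⁻ x, kIter κ N x U ∂μ :=
            lintegral_mono fun x => (hpball x y).le.trans (measure_mono hball)
    have h2 : (μ.bind (kIter κ N)) U ≤ c ^ N * μ U := by
      have := Measure.le_iff'.mp (hiter N) U
      simpa [Measure.smul_apply, smul_eq_mul] using this
    rw [hμU, mul_zero] at h2
    exact hp.ne' (le_antisymm (h1.trans h2) (zero_le : 0 ≤ p))
  · -- Part 3
    apply le_ciInf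
    rintro ⟨n, hn⟩
    have h2 := part2 n
    have hn0 : (n : ℝ) ≠ 0 := Nat.cast_ne_zero.mpr (by omega)
    calc lam2 = (lam2 ^ n) ^ ((n : ℝ)⁻¹) := by
          rw [← Real.rpow_natCast lam2 n, ← Real.rpow_mul hlam2.le,
            mul_inv_cancel₀ hn0, Real.rpow_one]
      _ ≤ supNorm (FKiter κ V n 1) ^ ((n : ℝ)⁻¹) :=
          Real.rpow_le_rpow (pow_nonneg hlam2.le n) h2 (by positivity)
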